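/- Upper bound for rank of PSR representations of decodable POMDPs via kernel linear MDPs: For any POMDP, the rank of every system-dynamics matrix D_h is at most the number of latent states S. Moreover, if the underlying latent MDP of the POMDP is a d_lin-dimensional kernel linear MDP—i.e., there exist feature maps φ: S×A → ℝ^{d_lin}, ψ: S → ℝ^{d_lin}, and matrices W_h ∈ ℝ^{d_lin×d_lin} with T_{h,a}(s'|s) = φ(s,a)ᵀ W_h ψ(s') for all h, s, a, s'—then rank(D_h) ≤ min(S, d_lin) for all h. -/

import Mathlib

open Matrix

/-- Unnormalized belief recursion of a POMDP: `bel h s = P(o_{1:h}, s_{h+1} = s)`,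
alternating emission `diag(O_h(o_h|·))` and transition `T_{h,a_h}`. -/
noncomputable def bel {S O A : ℕ} (T : ℕ → Fin A → Matrix (Fin S) (Fin S) ℝ)
    (Ob : ℕ → Matrix (Fin O) (Fin S) ℝ) (μ : Fin S → ℝ)
    (o : ℕ → Fin O) (a : ℕ → Fin A) : ℕ → Fin S → ℝ
  | 0 => μ
  | h + 1 => (T h (a h)).mulVec fun s => Ob h (o h) s * bel T Ob μ o a h s

/-- Trajectory probability `P̄((o,a)_{1:H}) = 1ᵀ (∏_h T_{h,a_h} diag(O_h(o_h|·))) μ₁`. -/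
noncomputable def trajProb {S O A : ℕ} (H : ℕ) (hH : 0 < H)
    (T : ℕ → Fin A → Matrix (Fin S) (Fin S) ℝ)
    (Ob : ℕ → Matrix (Fin O) (Fin S) ℝ) (μ : Fin S → ℝ)
    (o : Fin H → Fin O) (a : Fin H → Fin A) : ℝ :=
  ∑ s, bel T Ob μ (fun k => if h : k < H then o ⟨k, h⟩ else o ⟨0, hH⟩)
      (fun k => if h : k < H then a ⟨k, h⟩ else a ⟨0, hH⟩) H s

/-- System-dynamics matrix `D_h` of the POMDP: rows indexed by futures, columns by
histories (both encoded as full trajectories). -/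
noncomputable def sysDynP {S O A : ℕ} (H : ℕ) (hH : 0 < H)
    (T : ℕ → Fin A → Matrix (Fin S) (Fin S) ℝ)
    (Ob : ℕ → Matrix (Fin O) (Fin S) ℝ) (μ : Fin S → ℝ) (h : ℕ) :
    Matrix ((Fin H → Fin O) × (Fin H → Fin A)) ((Fin H → Fin O) × (Fin H → Fin A)) ℝ :=
  Matrix.of fun fut hist =>
    trajProb H hH T Ob μ (fun i => if (i : ℕ) < h then hist.1 i else fut.1 i)
      (fun i => if (i : ℕ) < h then hist.2 i else fut.2 i)


/-- Product of step matrices `T_{h+n-1} diag(O_{h+n-1}) ⋯ T_h diag(O_h)`. -/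
noncomputable def futM {S O A : ℕ} (T : ℕ → Fin A → Matrix (Fin S) (Fin S) ℝ)
    (Ob : ℕ → Matrix (Fin O) (Fin S) ℝ)
    (o : ℕ → Fin O) (a : ℕ → Fin A) (h : ℕ) : ℕ → Matrix (Fin S) (Fin S) ℝ
  | 0 => 1
  | n + 1 => (T (h + n) (a (h + n)) *
      Matrix.diagonal (fun s => Ob (h + n) (o (h + n)) s)) * futM T Ob o a h n

lemma bel_add {S O A : ℕ} (T : ℕ → Fin A → Matrix (Fin S) (Fin S) ℝ)
    (Ob : ℕ → Matrix (Fin O) (Fin S) ℝ) (μ : Fin S → ℝ)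
    (o : ℕ → Fin O) (a : ℕ → Fin A) (h n : ℕ) :
    bel T Ob μ o a (h + n) = (futM T Ob o a h n).mulVec (bel T Ob μ o a h) := by
  induction n with
  | zero => simp [futM]
  | succ n ih =>
      show bel T Ob μ o a ((h + n) + 1) = _
      rw [show bel T Ob μ o a ((h+n)+1) =
        (T (h+n) (a (h+n))).mulVec (fun s => Ob (h+n) (o (h+n)) s * bel T Ob μ o a (h+n) s)
        from rfl, ih]
      have hd : (fun s => Ob (h+n) (o (h+n)) s * (futM T Ob o a h n *ᵥ bel T Ob μ o a h) s)
          = (Matrix.diagonal fun s => Ob (h+n) (o (h+n)) s) *ᵥ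
            (futM T Ob o a h n *ᵥ bel T Ob μ o a h) := by
        ext s; simp [Matrix.mulVec_diagonal]
      rw [hd, Matrix.mulVec_mulVec, Matrix.mulVec_mulVec]
      rfl

lemma bel_congr {S O A : ℕ} (T : ℕ → Fin A → Matrix (Fin S) (Fin S) ℝ)
    (Ob : ℕ → Matrix (Fin O) (Fin S) ℝ) (μ : Fin S → ℝ)
    {o o' : ℕ → Fin O} {a a' : ℕ → Fin A} {h : ℕ}
    (ho : ∀ k < h, o k = o' k) (ha : ∀ k < h, a k = a' k) :
    bel T Ob μ o a h = bel T Ob μ o' a' h := by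
  induction h with
  | zero => rfl
  | succ h ih =>
      have ih' := ih (fun k hk => ho k (Nat.lt_succ_of_lt hk))
        (fun k hk => ha k (Nat.lt_succ_of_lt hk))
      show (T h (a h)).mulVec (fun s => Ob h (o h) s * bel T Ob μ o a h s) =
           (T h (a' h)).mulVec (fun s => Ob h (o' h) s * bel T Ob μ o' a' h s)
      rw [ih', ho h (Nat.lt_succ_self h), ha h (Nat.lt_succ_self h)]

lemma futM_congr {S O A : ℕ} (T : ℕ → Fin A → Matrix (Fin S) (Fin S) ℝ)
    (Ob : ℕ → Matrix (Fin O) (Fin S) ℝ)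
    {o o' : ℕ → Fin O} {a a' : ℕ → Fin A} {h n : ℕ}
    (ho : ∀ k, h ≤ k → k < h + n → o k = o' k)
    (ha : ∀ k, h ≤ k → k < h + n → a k = a' k) :
    futM T Ob o a h n = futM T Ob o' a' h n := by
  induction n with
  | zero => rfl
  | succ n ih =>
      have ih' := ih (fun k h1 h2 => ho k h1 (h2.trans (Nat.lt_succ_self _)))
        (fun k h1 h2 => ha k h1 (h2.trans (Nat.lt_succ_self _)))
      show (T (h+n) (a (h+n)) * _) * _ = (T (h+n) (a' (h+n)) * _) * _
      rw [ih', ho (h+n) (Nat.le_add_right _ _) (Nat.lt_succ_self _),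
        ha (h+n) (Nat.le_add_right _ _) (Nat.lt_succ_self _)]


/-- Extend a finite sequence to `ℕ` the same way `trajProb` does. -/
noncomputable def extSeq {X : Type*} (H : ℕ) (hH : 0 < H) (f : Fin H → X) : ℕ → X :=
  fun k => if hk : k < H then f ⟨k, hk⟩ else f ⟨0, hH⟩

/-- "Future" factor of the system-dynamics matrix. -/
noncomputable def Fmat {S O A : ℕ} (H : ℕ) (hH : 0 < H)
    (T : ℕ → Fin A → Matrix (Fin S) (Fin S) ℝ)
    (Ob : ℕ → Matrix (Fin O) (Fin S) ℝ) (h : ℕ) :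
    Matrix ((Fin H → Fin O) × (Fin H → Fin A)) (Fin S) ℝ :=
  fun fut s => ∑ s', futM T Ob (extSeq H hH fut.1) (extSeq H hH fut.2) h (H - h) s' s

/-- "History" factor of the system-dynamics matrix. -/
noncomputable def Gmat {S O A : ℕ} (H : ℕ) (hH : 0 < H)
    (T : ℕ → Fin A → Matrix (Fin S) (Fin S) ℝ)
    (Ob : ℕ → Matrix (Fin O) (Fin S) ℝ) (μ : Fin S → ℝ) (h : ℕ) :
    Matrix (Fin S) ((Fin H → Fin O) × (Fin H → Fin A)) ℝ :=
  fun s hist => bel T Ob μ (extSeq H hH hist.1) (extSeq H hH hist.2) h s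

lemma traj_factor {S O A : ℕ} (T : ℕ → Fin A → Matrix (Fin S) (Fin S) ℝ)
    (Ob : ℕ → Matrix (Fin O) (Fin S) ℝ) (μ : Fin S → ℝ)
    (o : ℕ → Fin O) (a : ℕ → Fin A) (h n : ℕ) :
    ∑ s, bel T Ob μ o a (h + n) s
      = ∑ s', (∑ s, futM T Ob o a h n s s') * bel T Ob μ o a h s' := by
  rw [bel_add]
  simp only [Matrix.mulVec, dotProduct, Finset.sum_mul]
  exact Finset.sum_comm

lemma sysDynP_factor {S O A : ℕ} (H : ℕ) (hH : 0 < H)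
    (T : ℕ → Fin A → Matrix (Fin S) (Fin S) ℝ)
    (Ob : ℕ → Matrix (Fin O) (Fin S) ℝ) (μ : Fin S → ℝ) (h : ℕ) (hhH : h ≤ H) :
    sysDynP H hH T Ob μ h = Fmat H hH T Ob h * Gmat H hH T Ob μ h := by
  ext fut hist
  set oS : ℕ → Fin O := fun k => if hk : k < H then
      (if k < h then hist.1 ⟨k, hk⟩ else fut.1 ⟨k, hk⟩)
    else (if (0 : ℕ) < h then hist.1 ⟨0, hH⟩ else fut.1 ⟨0, hH⟩) with hoS
  set aS : ℕ → Fin A := fun k => if hk : k < H then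
      (if k < h then hist.2 ⟨k, hk⟩ else fut.2 ⟨k, hk⟩)
    else (if (0 : ℕ) < h then hist.2 ⟨0, hH⟩ else fut.2 ⟨0, hH⟩) with haS
  have lhs_eq : sysDynP H hH T Ob μ h fut hist = ∑ s, bel T Ob μ oS aS H s := rfl
  have hsplit : H = h + (H - h) := (Nat.add_sub_cancel' hhH).symm
  have eF : futM T Ob oS aS h (H - h)
      = futM T Ob (extSeq H hH fut.1) (extSeq H hH fut.2) h (H - h) := by
    refine futM_congr T Ob ?_ ?_ <;> intro k h1 h2 <;>
      · have hkH : k < H := by omega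
        simp only [hoS, haS, extSeq, dif_pos hkH, if_neg (Nat.not_lt.mpr h1)]
  have eG : bel T Ob μ oS aS h = bel T Ob μ (extSeq H hH hist.1) (extSeq H hH hist.2) h := by
    refine bel_congr T Ob μ ?_ ?_ <;> intro k hk <;>
      · have hkH : k < H := lt_of_lt_of_le hk hhH
        simp only [hoS, haS, extSeq, dif_pos hkH, if_pos hk]
  rw [lhs_eq]
  conv_lhs => rw [hsplit]
  rw [traj_factor, Matrix.mul_apply]
  refine Finset.sum_congr rfl fun s' _ => ?_
  rw [eF, eG]
  rfl

/-- Rank bounds for the system-dynamics matrices of POMDPs: `rank(D_h) ≤ S` always, and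
if the underlying latent MDP is a `d_lin`-dimensional kernel linear MDP
(`T_{h,a}(s'|s) = φ(s,a)ᵀ W_h ψ(s')`), then `rank(D_h) ≤ min(S, d_lin)` as well. -/
theorem pomdp_sysdyn_rank {S O A : ℕ} (H : ℕ) (hH : 0 < H) (dlin : ℕ)
    (T : ℕ → Fin A → Matrix (Fin S) (Fin S) ℝ)
    (Ob : ℕ → Matrix (Fin O) (Fin S) ℝ) (μ : Fin S → ℝ) :
    (∀ h ≤ H, (sysDynP H hH T Ob μ h).rank ≤ S) ∧
    (∀ (φ : Fin S → Fin A → Fin dlin → ℝ) (ψ : Fin S → Fin dlin → ℝ)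
        (W : ℕ → Matrix (Fin dlin) (Fin dlin) ℝ),
      (∀ (h : ℕ) (a : Fin A) (s s' : Fin S),
        T h a s' s = ∑ k, ∑ l, φ s a k * W h k l * ψ s' l) →
      ∀ h, 1 ≤ h → h ≤ H → (sysDynP H hH T Ob μ h).rank ≤ min S dlin) := by
  classical
  have part1 : ∀ h ≤ H, (sysDynP H hH T Ob μ h).rank ≤ S := by
    intro h hhH
    rw [sysDynP_factor H hH T Ob μ h hhH]
    exact (Matrix.rank_mul_le_right _ _).trans
      ((Matrix.rank_le_card_height _).trans (by simp))
  refine ⟨part1, ?_⟩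
  intro φ ψ W hT h h1 hhH
  refine le_min (part1 h hhH) ?_
  set g := h - 1 with hg
  have hgh : h = g + 1 := (Nat.succ_pred_eq_of_pos h1).symm
  set Ψm : Matrix (Fin S) (Fin dlin) ℝ := fun s l => ψ s l with hΨ
  set C : Matrix (Fin dlin) ((Fin H → Fin O) × (Fin H → Fin A)) ℝ := fun l hist =>
    ∑ t, ∑ k, φ t (extSeq H hH hist.2 g) k * W g k l *
      (Ob g (extSeq H hH hist.1 g) t *
        bel T Ob μ (extSeq H hH hist.1) (extSeq H hH hist.2) g t) with hC
  have hG : Gmat H hH T Ob μ h = Ψm * C := by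
    ext s hist
    show bel T Ob μ (extSeq H hH hist.1) (extSeq H hH hist.2) h s = _
    rw [hgh]
    show ((T g (extSeq H hH hist.2 g)).mulVec fun t =>
        Ob g (extSeq H hH hist.1 g) t *
          bel T Ob μ (extSeq H hH hist.1) (extSeq H hH hist.2) g t) s = _
    simp only [Matrix.mulVec, dotProduct, Matrix.mul_apply, hC, hΨ, hT,
      Finset.sum_mul, Finset.mul_sum]
    refine ((Finset.sum_congr rfl fun x _ => Finset.sum_comm).trans
      (Finset.sum_comm.trans ?_))
    exact Finset.sum_congr rfl fun l _ => by
      simp only [Finset.mul_sum]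
      exact Finset.sum_congr rfl fun x _ =>
        Finset.sum_congr rfl fun k _ => by ring
  rw [sysDynP_factor H hH T Ob μ h hhH, hG, ← Matrix.mul_assoc]
  exact (Matrix.rank_mul_le_left _ _).trans
    ((Matrix.rank_le_card_width _).trans (by simp))
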